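/- arXiv:1910.09689 — 5 statements merged into one kernel-verified Lean document; each statement's English description precedes it below -/
import Mathlib

section
/- Let a : ℝ² → ℝ² be continuously differentiable and ψ : ℝ² → ℂ be twice continuously differentiable. Then for every x ∈ ℝ², the Weitzenböck-type identity −Δ_aψ(x) = 4·∂_a†(∂_aψ)(x) + (curl a)(x)·ψ(x) holds. -/
noncomputable section

open Complex

/-- First partial derivative of a complex-valued function on ℝ². -/
def pd1 (f : ℝ × ℝ → ℂ) (x : ℝ × ℝ) : ℂ := fderiv ℝ f x (1, 0)

/-- Second partial derivative of a complex-valued function on ℝ². -/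
def pd2 (f : ℝ × ℝ → ℂ) (x : ℝ × ℝ) : ℂ := fderiv ℝ f x (0, 1)

/-- First partial derivative of a real-valued function on ℝ². -/
def pd1r (f : ℝ × ℝ → ℝ) (x : ℝ × ℝ) : ℝ := fderiv ℝ f x (1, 0)

/-- Second partial derivative of a real-valued function on ℝ². -/
def pd2r (f : ℝ × ℝ → ℝ) (x : ℝ × ℝ) : ℝ := fderiv ℝ f x (0, 1)

/-- Covariant derivative D₁ψ = ∂₁ψ + i·a₁·ψ. -/
def covD1 (a : ℝ × ℝ → ℝ × ℝ) (ψ : ℝ × ℝ → ℂ) (x : ℝ × ℝ) : ℂ :=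
  pd1 ψ x + Complex.I * ((a x).1 : ℂ) * ψ x

/-- Covariant derivative D₂ψ = ∂₂ψ + i·a₂·ψ. -/
def covD2 (a : ℝ × ℝ → ℝ × ℝ) (ψ : ℝ × ℝ → ℂ) (x : ℝ × ℝ) : ℂ :=
  pd2 ψ x + Complex.I * ((a x).2 : ℂ) * ψ x

/-- curl a = ∂₁a₂ − ∂₂a₁. -/
def curl2 (a : ℝ × ℝ → ℝ × ℝ) (x : ℝ × ℝ) : ℝ :=
  pd1r (fun y => (a y).2) x - pd2r (fun y => (a y).1) x


/-- Magnetic Laplacian Δ_aψ = D₁(D₁ψ) + D₂(D₂ψ). -/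
def magLap (a : ℝ × ℝ → ℝ × ℝ) (ψ : ℝ × ℝ → ℂ) (x : ℝ × ℝ) : ℂ :=
  covD1 a (covD1 a ψ) x + covD2 a (covD2 a ψ) x

/-- Complexified covariant derivative ∂_aψ = (1/2)(D₁ψ − i·D₂ψ). -/
def delA (a : ℝ × ℝ → ℝ × ℝ) (ψ : ℝ × ℝ → ℂ) (x : ℝ × ℝ) : ℂ :=
  (1 / 2 : ℂ) * (covD1 a ψ x - Complex.I * covD2 a ψ x)

/-- Formal adjoint ∂_a†ψ = −(1/2)(D₁ψ + i·D₂ψ). -/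
def delAdag (a : ℝ × ℝ → ℝ × ℝ) (ψ : ℝ × ℝ → ℂ) (x : ℝ × ℝ) : ℂ :=
  -(1 / 2 : ℂ) * (covD1 a ψ x + Complex.I * covD2 a ψ x)

noncomputable section
open Complex

section helpers

variable {f g : ℝ × ℝ → ℂ} {fr : ℝ × ℝ → ℝ} {x v : ℝ × ℝ}

lemma fd_add (hf : DifferentiableAt ℝ f x) (hg : DifferentiableAt ℝ g x) :
    fderiv ℝ (fun y => f y + g y) x v = fderiv ℝ f x v + fderiv ℝ g x v := by
  rw [fderiv_fun_add hf hg]; rfl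

lemma fd_sub (hf : DifferentiableAt ℝ f x) (hg : DifferentiableAt ℝ g x) :
    fderiv ℝ (fun y => f y - g y) x v = fderiv ℝ f x v - fderiv ℝ g x v := by
  rw [fderiv_fun_sub hf hg]; rfl

lemma fd_mul (hf : DifferentiableAt ℝ f x) (hg : DifferentiableAt ℝ g x) :
    fderiv ℝ (fun y => f y * g y) x v = fderiv ℝ f x v * g x + f x * fderiv ℝ g x v := by
  rw [fderiv_fun_mul hf hg]
  simp only [ContinuousLinearMap.add_apply, ContinuousLinearMap.smul_apply, smul_eq_mul]
  ring

lemma fd_const_mul (hf : DifferentiableAt ℝ f x) (c : ℂ) :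
    fderiv ℝ (fun y => c * f y) x v = c * fderiv ℝ f x v := by
  rw [fderiv_const_mul hf c]; rfl

lemma fd_ofReal (hf : DifferentiableAt ℝ fr x) :
    fderiv ℝ (fun y => ((fr y : ℝ) : ℂ)) x v = ((fderiv ℝ fr x v : ℝ) : ℂ) := by
  have : fderiv ℝ (fun y => ((fr y : ℝ) : ℂ)) x =
      Complex.ofRealCLM.comp (fderiv ℝ fr x) :=
    (Complex.ofRealCLM.hasFDerivAt.comp x hf.hasFDerivAt).fderiv
  rw [this]; rfl

lemma fd_symm {ψ : ℝ × ℝ → ℂ} (hψ : ContDiff ℝ 2 ψ) (x v w : ℝ × ℝ) :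
    fderiv ℝ (fun y => fderiv ℝ ψ y v) x w = fderiv ℝ (fun y => fderiv ℝ ψ y w) x v := by
  have hF : ContDiff ℝ 1 (fderiv ℝ ψ) := hψ.fderiv_right (by norm_num)
  have hFd : DifferentiableAt ℝ (fderiv ℝ ψ) x := (hF.differentiable one_ne_zero) x
  have h1 : ∀ u : ℝ × ℝ, fderiv ℝ (fun y => fderiv ℝ ψ y u) x =
      (fderiv ℝ (fderiv ℝ ψ) x).flip u := by
    intro u
    have := fderiv_clm_apply (c := fderiv ℝ ψ) (u := fun _ => u) hFd
      (differentiableAt_const u)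
    simpa using this
  rw [h1 v, h1 w]
  exact (hψ.contDiffAt.isSymmSndFDerivAt (by simp)) w v

end helpers
/-- Weitzenböck-type identity: `−Δ_aψ = 4·∂_a†(∂_aψ) + (curl a)·ψ`. -/
theorem weitzenboeck_identity
    (a : ℝ × ℝ → ℝ × ℝ) (ψ : ℝ × ℝ → ℂ)
    (ha : ContDiff ℝ 1 a) (hψ : ContDiff ℝ 2 ψ) :
    ∀ x : ℝ × ℝ,
      -(magLap a ψ x) = 4 * delAdag a (delA a ψ) x + (curl2 a x : ℂ) * ψ x := by
  intro x
  -- differentiability facts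
  have hψd : Differentiable ℝ ψ := hψ.differentiable two_ne_zero
  have hF : ContDiff ℝ 1 (fderiv ℝ ψ) := hψ.fderiv_right (by norm_num)
  have hFd : Differentiable ℝ (fderiv ℝ ψ) := hF.differentiable one_ne_zero
  have hpd : ∀ v : ℝ × ℝ, Differentiable ℝ (fun y => fderiv ℝ ψ y v) := by
    intro v
    exact hFd.clm_apply (differentiable_const v)
  have ha1 : Differentiable ℝ (fun y => (a y).1) :=
    (contDiff_fst.comp ha).differentiable one_ne_zero
  have ha2 : Differentiable ℝ (fun y => (a y).2) :=
    (contDiff_snd.comp ha).differentiable one_ne_zero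
  have ha1c : Differentiable ℝ (fun y => (((a y).1 : ℝ) : ℂ)) :=
    Complex.ofRealCLM.differentiable.comp ha1
  have ha2c : Differentiable ℝ (fun y => (((a y).2 : ℝ) : ℂ)) :=
    Complex.ofRealCLM.differentiable.comp ha2
  have hD1 : Differentiable ℝ (covD1 a ψ) := by
    unfold covD1 pd1
    exact (hpd (1,0)).add (((differentiable_const Complex.I).mul ha1c).mul hψd)
  have hD2 : Differentiable ℝ (covD2 a ψ) := by
    unfold covD2 pd2
    exact (hpd (0,1)).add (((differentiable_const Complex.I).mul ha2c).mul hψd)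
  have hdelA : Differentiable ℝ (delA a ψ) := by
    unfold delA
    exact (differentiable_const _).mul (hD1.sub ((differentiable_const Complex.I).mul hD2))
  -- derivatives of covD1 / covD2
  have hcov1 : ∀ v : ℝ × ℝ, fderiv ℝ (covD1 a ψ) x v =
      fderiv ℝ (fun y => fderiv ℝ ψ y (1,0)) x v
        + Complex.I * ((fderiv ℝ (fun y => (a y).1) x v : ℝ) : ℂ) * ψ x
        + Complex.I * (((a x).1 : ℝ) : ℂ) * fderiv ℝ ψ x v := by
    intro v
    unfold covD1 pd1
    rw [fd_add (g := fun y => Complex.I * (((a y).1 : ℝ) : ℂ) * ψ y) (hpd (1,0)).differentiableAt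
      ((((differentiable_const Complex.I).mul ha1c).mul hψd) x),
      fd_mul (f := fun y => Complex.I * (((a y).1 : ℝ) : ℂ)) (((differentiable_const Complex.I).mul ha1c) x) (hψd x),
      fd_const_mul (ha1c x), fd_ofReal (ha1 x)]
    ring
  have hcov2 : ∀ v : ℝ × ℝ, fderiv ℝ (covD2 a ψ) x v =
      fderiv ℝ (fun y => fderiv ℝ ψ y (0,1)) x v
        + Complex.I * ((fderiv ℝ (fun y => (a y).2) x v : ℝ) : ℂ) * ψ x
        + Complex.I * (((a x).2 : ℝ) : ℂ) * fderiv ℝ ψ x v := by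
    intro v
    unfold covD2 pd2
    rw [fd_add (g := fun y => Complex.I * (((a y).2 : ℝ) : ℂ) * ψ y) (hpd (0,1)).differentiableAt
      ((((differentiable_const Complex.I).mul ha2c).mul hψd) x),
      fd_mul (f := fun y => Complex.I * (((a y).2 : ℝ) : ℂ)) (((differentiable_const Complex.I).mul ha2c) x) (hψd x),
      fd_const_mul (ha2c x), fd_ofReal (ha2 x)]
    ring
  -- derivative of delA
  have hdel : ∀ v : ℝ × ℝ, fderiv ℝ (delA a ψ) x v =
      (1 / 2 : ℂ) * (fderiv ℝ (covD1 a ψ) x v - Complex.I * fderiv ℝ (covD2 a ψ) x v) := by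
    intro v
    unfold delA
    rw [fd_const_mul (f := fun y => covD1 a ψ y - Complex.I * covD2 a ψ y) ((hD1.sub ((differentiable_const Complex.I).mul hD2)) x),
      fd_sub (g := fun y => Complex.I * covD2 a ψ y) (hD1 x) (((differentiable_const Complex.I).mul hD2) x),
      fd_const_mul (hD2 x)]
  have hsymm := fd_symm hψ x (1,0) (0,1)
  -- expand everything
  have e1 : magLap a ψ x = fderiv ℝ (covD1 a ψ) x (1,0) + Complex.I * (((a x).1 : ℝ) : ℂ) * covD1 a ψ x
      + (fderiv ℝ (covD2 a ψ) x (0,1) + Complex.I * (((a x).2 : ℝ) : ℂ) * covD2 a ψ x) := rfl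
  have e2 : delAdag a (delA a ψ) x = -(1/2 : ℂ) * ((fderiv ℝ (delA a ψ) x (1,0)
      + Complex.I * (((a x).1 : ℝ) : ℂ) * delA a ψ x)
      + Complex.I * (fderiv ℝ (delA a ψ) x (0,1) + Complex.I * (((a x).2 : ℝ) : ℂ) * delA a ψ x)) := rfl
  rw [e1, e2, hdel (1,0), hdel (0,1), hcov1 (1,0), hcov1 (0,1), hcov2 (1,0), hcov2 (0,1), hsymm]
  unfold delA covD1 covD2 curl2 pd1 pd2 pd1r pd2r
  push_cast
  linear_combination ((↑(fderiv ℝ (fun y => (a y).2) x (1,0))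
    - ↑(fderiv ℝ (fun y => (a y).1) x (0,1)) : ℂ) * ψ x
    - Complex.I^2 * ψ x * (↑(a x).2)^2
    - 2 * ψ x * ↑(fderiv ℝ (fun y => (a y).2) x (1,0))
    + 2 * ψ x * ↑(fderiv ℝ (fun y => (a y).1) x (0,1))
    - fderiv ℝ (fun y => fderiv ℝ ψ y (0,1)) x (0,1)
    - Complex.I * ψ x * ↑(fderiv ℝ (fun y => (a y).2) x (0,1))
    - 2 * Complex.I * ↑(a x).2 * fderiv ℝ ψ x (0,1)) * Complex.I_sq
end
end
end

section
/- Let a : ℝ² → ℝ² be continuously differentiable and ψ : ℝ² → ℂ be twice continuously differentiable. Then for every x ∈ ℝ², the pointwise Bogomolny-type identity holds: |D₁ψ(x)|² + |D₂ψ(x)|² = |D₁ψ(x) − i·D₂ψ(x)|² + (curl a)(x)·|ψ(x)|² − (∂₁J₂ − ∂₂J₁)(x), where J = (J₁,J₂) is the supercurrent of (ψ,a). -/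
noncomputable section

open Complex

/-- Supercurrent component J₁ = Im(conj(ψ)·D₁ψ). -/
def supJ1 (a : ℝ × ℝ → ℝ × ℝ) (ψ : ℝ × ℝ → ℂ) (x : ℝ × ℝ) : ℝ :=
  ((starRingEnd ℂ) (ψ x) * covD1 a ψ x).im

/-- Supercurrent component J₂ = Im(conj(ψ)·D₂ψ). -/
def supJ2 (a : ℝ × ℝ → ℝ × ℝ) (ψ : ℝ × ℝ → ℂ) (x : ℝ × ℝ) : ℝ :=
  ((starRingEnd ℂ) (ψ x) * covD2 a ψ x).im


lemma fderiv_J_apply (a : ℝ × ℝ → ℝ × ℝ) (ψ : ℝ × ℝ → ℂ)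
    (ha : ContDiff ℝ 1 a) (hψ : ContDiff ℝ 2 ψ)
    (w : ℝ × ℝ) (π : (ℝ × ℝ) →L[ℝ] ℝ) (x v : ℝ × ℝ) :
    fderiv ℝ (fun y => ((starRingEnd ℂ) (ψ y)
        * (fderiv ℝ ψ y w + Complex.I * (π (a y) : ℂ) * ψ y)).im) x v
      = ((starRingEnd ℂ) (fderiv ℝ ψ x v)
            * (fderiv ℝ ψ x w + Complex.I * (π (a x) : ℂ) * ψ x)
         + (starRingEnd ℂ) (ψ x)
            * (fderiv ℝ (fderiv ℝ ψ) x v w + Complex.I * (π (fderiv ℝ a x v) : ℂ) * ψ x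
               + Complex.I * (π (a x) : ℂ) * fderiv ℝ ψ x v)).im := by
  have hψd : Differentiable ℝ ψ := hψ.differentiable (by norm_num)
  have hA : HasFDerivAt ψ (fderiv ℝ ψ x) x := (hψd x).hasFDerivAt
  have hψ1 : ContDiff ℝ 1 (fderiv ℝ ψ) := hψ.fderiv_right (by norm_num)
  have hB0 : HasFDerivAt (fderiv ℝ ψ) (fderiv ℝ (fderiv ℝ ψ) x) x :=
    (hψ1.differentiable one_ne_zero x).hasFDerivAt
  have hB : HasFDerivAt (fun y => fderiv ℝ ψ y w)
      ((ContinuousLinearMap.apply ℝ ℂ w).comp (fderiv ℝ (fderiv ℝ ψ) x)) x :=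
    (ContinuousLinearMap.apply ℝ ℂ w).hasFDerivAt.comp x hB0
  have haA : HasFDerivAt a (fderiv ℝ a x) x := ((ha.differentiable one_ne_zero) x).hasFDerivAt
  have hC : HasFDerivAt (fun y => ((π (a y) : ℝ) : ℂ))
      (Complex.ofRealCLM.comp (π.comp (fderiv ℝ a x))) x :=
    Complex.ofRealCLM.hasFDerivAt.comp x (π.hasFDerivAt.comp x haA)
  have hterm : HasFDerivAt (fun y => Complex.I * (π (a y) : ℂ) * ψ y)
      _ x := ((hC.const_mul Complex.I).mul hA)
  have hsum := hB.add hterm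
  have hconj : HasFDerivAt (fun y => (starRingEnd ℂ) (ψ y)
        * (fderiv ℝ ψ y w + Complex.I * (π (a y) : ℂ) * ψ y)) _ x := hA.star.mul hsum
  have hfin : HasFDerivAt (fun y => ((starRingEnd ℂ) (ψ y)
        * (fderiv ℝ ψ y w + Complex.I * (π (a y) : ℂ) * ψ y)).im) _ x :=
    Complex.imCLM.hasFDerivAt.comp x hconj
  rw [hfin.fderiv]
  simp only [ContinuousLinearMap.comp_apply, ContinuousLinearMap.add_apply,
    ContinuousLinearMap.smul_apply, ContinuousLinearMap.apply_apply,
    Complex.imCLM_apply, Complex.ofRealCLM_apply, smul_eq_mul, Complex.real_smul]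
  have hst : ∀ z : ℂ, (starL' ℝ : ℂ ≃L[ℝ] ℂ) z = (starRingEnd ℂ) z := fun z => rfl
  simp only [ContinuousLinearEquiv.coe_coe, hst, Complex.star_def]
  congr 1
  ring

/-- Pointwise Bogomolny-type identity:
`|D₁ψ|² + |D₂ψ|² = |D₁ψ − i·D₂ψ|² + (curl a)·|ψ|² − (∂₁J₂ − ∂₂J₁)`. -/
theorem bogomolny_pointwise_identity
    (a : ℝ × ℝ → ℝ × ℝ) (ψ : ℝ × ℝ → ℂ)
    (ha : ContDiff ℝ 1 a) (hψ : ContDiff ℝ 2 ψ) :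
    ∀ x : ℝ × ℝ,
      ‖covD1 a ψ x‖ ^ 2 + ‖covD2 a ψ x‖ ^ 2
        = ‖covD1 a ψ x - Complex.I * covD2 a ψ x‖ ^ 2
          + curl2 a x * ‖ψ x‖ ^ 2
          - (pd1r (supJ2 a ψ) x - pd2r (supJ1 a ψ) x) := by
  intro x
  have hsym : fderiv ℝ (fderiv ℝ ψ) x ((1:ℝ),(0:ℝ)) ((0:ℝ),(1:ℝ))
      = fderiv ℝ (fderiv ℝ ψ) x ((0:ℝ),(1:ℝ)) ((1:ℝ),(0:ℝ)) :=
    (hψ.contDiffAt.isSymmSndFDerivAt (by simp)) _ _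
  have haA : HasFDerivAt a (fderiv ℝ a x) x := ((ha.differentiable one_ne_zero) x).hasFDerivAt
  have hc1 : pd1r (fun y => (a y).2) x = (fderiv ℝ a x ((1:ℝ),(0:ℝ))).2 := by
    have h : HasFDerivAt (fun y => (a y).2)
        ((ContinuousLinearMap.snd ℝ ℝ ℝ).comp (fderiv ℝ a x)) x :=
      (ContinuousLinearMap.snd ℝ ℝ ℝ).hasFDerivAt.comp x haA
    show fderiv ℝ (fun y => (a y).2) x ((1:ℝ),(0:ℝ)) = _
    rw [h.fderiv]; rfl
  have hc2 : pd2r (fun y => (a y).1) x = (fderiv ℝ a x ((0:ℝ),(1:ℝ))).1 := by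
    have h : HasFDerivAt (fun y => (a y).1)
        ((ContinuousLinearMap.fst ℝ ℝ ℝ).comp (fderiv ℝ a x)) x :=
      (ContinuousLinearMap.fst ℝ ℝ ℝ).hasFDerivAt.comp x haA
    show fderiv ℝ (fun y => (a y).1) x ((0:ℝ),(1:ℝ)) = _
    rw [h.fderiv]; rfl
  have h2 : pd1r (supJ2 a ψ) x
      = ((starRingEnd ℂ) (fderiv ℝ ψ x ((1:ℝ),(0:ℝ)))
            * (fderiv ℝ ψ x ((0:ℝ),(1:ℝ)) + Complex.I * (((a x).2 : ℝ) : ℂ) * ψ x)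
         + (starRingEnd ℂ) (ψ x)
            * (fderiv ℝ (fderiv ℝ ψ) x ((1:ℝ),(0:ℝ)) ((0:ℝ),(1:ℝ))
               + Complex.I * (((fderiv ℝ a x ((1:ℝ),(0:ℝ))).2 : ℝ) : ℂ) * ψ x
               + Complex.I * (((a x).2 : ℝ) : ℂ) * fderiv ℝ ψ x ((1:ℝ),(0:ℝ)))).im :=
    fderiv_J_apply a ψ ha hψ ((0:ℝ),(1:ℝ)) (ContinuousLinearMap.snd ℝ ℝ ℝ) x ((1:ℝ),(0:ℝ))
  have h1 : pd2r (supJ1 a ψ) x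
      = ((starRingEnd ℂ) (fderiv ℝ ψ x ((0:ℝ),(1:ℝ)))
            * (fderiv ℝ ψ x ((1:ℝ),(0:ℝ)) + Complex.I * (((a x).1 : ℝ) : ℂ) * ψ x)
         + (starRingEnd ℂ) (ψ x)
            * (fderiv ℝ (fderiv ℝ ψ) x ((0:ℝ),(1:ℝ)) ((1:ℝ),(0:ℝ))
               + Complex.I * (((fderiv ℝ a x ((0:ℝ),(1:ℝ))).1 : ℝ) : ℂ) * ψ x
               + Complex.I * (((a x).1 : ℝ) : ℂ) * fderiv ℝ ψ x ((0:ℝ),(1:ℝ)))).im :=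
    fderiv_J_apply a ψ ha hψ ((1:ℝ),(0:ℝ)) (ContinuousLinearMap.fst ℝ ℝ ℝ) x ((0:ℝ),(1:ℝ))
  rw [curl2, hc1, hc2, h1, h2]
  rw [hsym]
  simp only [covD1, covD2, pd1, pd2]
  set z := ψ x
  set p1 := fderiv ℝ ψ x ((1:ℝ),(0:ℝ))
  set p2 := fderiv ℝ ψ x ((0:ℝ),(1:ℝ))
  set u := fderiv ℝ (fderiv ℝ ψ) x ((0:ℝ),(1:ℝ)) ((1:ℝ),(0:ℝ))
  set a1 := (a x).1
  set a2 := (a x).2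
  set b12 := (fderiv ℝ a x ((1:ℝ),(0:ℝ))).2
  set b21 := (fderiv ℝ a x ((0:ℝ),(1:ℝ))).1
  simp only [Complex.sq_norm, Complex.normSq_apply,
    Complex.add_re, Complex.add_im, Complex.sub_re, Complex.sub_im,
    Complex.mul_re, Complex.mul_im, Complex.I_re, Complex.I_im,
    Complex.ofReal_re, Complex.ofReal_im, Complex.conj_re, Complex.conj_im]
  ring
end
end

section
/- Let a : ℝ² → ℝ² be continuous and ψ : ℝ² → ℂ be continuously differentiable, and suppose ψ satisfies the first-order equation D₁ψ(x) = i·D₂ψ(x) for all x (equivalently ∂_aψ = 0). Then the supercurrent is a rotated gradient of the density: for all x, Im(conj(ψ)·D₁ψ)(x) = (1/2)·∂₂(|ψ|²)(x) and Im(conj(ψ)·D₂ψ)(x) = −(1/2)·∂₁(|ψ|²)(x); in vector form, Im(conj(ψ)·∇_aψ) = (1/2)·curl*(|ψ|²). -/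
noncomputable section

open Complex

lemma fderiv_normsq_apply (ψ : ℝ × ℝ → ℂ) (hψ : ContDiff ℝ 1 ψ) (x v : ℝ × ℝ) :
    fderiv ℝ (fun y => ‖ψ y‖ ^ 2) x v
      = 2 * ((starRingEnd ℂ) (ψ x) * fderiv ℝ ψ x v).re := by
  have hd := (hψ.differentiable one_ne_zero x).hasFDerivAt
  have h := hd.norm_sq
  rw [h.fderiv]
  simp [two_smul, Complex.inner]
  ring

/-- If `∂_aψ = 0` (i.e. `D₁ψ = i·D₂ψ`), then the supercurrent is the rotated
gradient of the density: `Im(conj(ψ)·∇_aψ) = (1/2)·curl*(|ψ|²)`. -/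
theorem supercurrent_of_selfdual
    (a : ℝ × ℝ → ℝ × ℝ) (ψ : ℝ × ℝ → ℂ)
    (ha : Continuous a) (hψ : ContDiff ℝ 1 ψ)
    (hsd : ∀ x : ℝ × ℝ, covD1 a ψ x = Complex.I * covD2 a ψ x) :
    ∀ x : ℝ × ℝ,
      ((starRingEnd ℂ) (ψ x) * covD1 a ψ x).im
          = (1 / 2) * pd2r (fun y => ‖ψ y‖ ^ 2) x
      ∧ ((starRingEnd ℂ) (ψ x) * covD2 a ψ x).im
          = -((1 / 2) * pd1r (fun y => ‖ψ y‖ ^ 2) x) := by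
  intro x
  have h1 : pd1r (fun y => ‖ψ y‖ ^ 2) x = 2 * ((starRingEnd ℂ) (ψ x) * pd1 ψ x).re :=
    fderiv_normsq_apply ψ hψ x (1, 0)
  have h2 : pd2r (fun y => ‖ψ y‖ ^ 2) x = 2 * ((starRingEnd ℂ) (ψ x) * pd2 ψ x).re :=
    fderiv_normsq_apply ψ hψ x (0, 1)
  have hx := hsd x
  unfold covD1 covD2 at hx ⊢
  have hp1 : pd1 ψ x = Complex.I * pd2 ψ x - ((a x).2 : ℂ) * ψ x
      - Complex.I * ((a x).1 : ℂ) * ψ x := by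
    linear_combination hx + ((a x).2 : ℂ) * ψ x * Complex.I_sq
  rw [h1, h2, hp1]
  constructor <;>
  · simp [Complex.ext_iff, Complex.mul_re, Complex.mul_im, Complex.normSq]
    ring
end
end

section
/- Let a : ℝ² → ℝ² be continuously differentiable, a₀ : ℝ² → ℝ continuous, v : ℝ → ℝ any function, and let ψ : ℝ² → ℂ be twice continuously differentiable and satisfy the stationary ZHK equation −Δ_aψ + v(|ψ|²)·ψ − a₀·ψ = 0 on ℝ². Then the supercurrent is divergence free: ∂₁J₁ + ∂₂J₂ = 0 on ℝ². -/
noncomputable section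

open Complex

lemma ofReal_fderiv (b : ℝ×ℝ → ℝ) (hb : Differentiable ℝ b) (x w : ℝ×ℝ) :
    fderiv ℝ (fun y => ((b y : ℂ))) x w = ((fderiv ℝ b x w : ℝ) : ℂ) := by
  have : fderiv ℝ (fun y => ((b y : ℂ))) x = Complex.ofRealCLM.comp (fderiv ℝ b x) :=
    (Complex.ofRealCLM.hasFDerivAt.comp x (hb x).hasFDerivAt).fderiv
  rw [this]; rfl

lemma conj_fderiv (ψ : ℝ×ℝ → ℂ) (hψ : Differentiable ℝ ψ) (x w : ℝ×ℝ) :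
    fderiv ℝ (fun y => (starRingEnd ℂ) (ψ y)) x w = (starRingEnd ℂ) (fderiv ℝ ψ x w) := by
  have : fderiv ℝ (fun y => (starRingEnd ℂ) (ψ y)) x
      = Complex.conjCLE.toContinuousLinearMap.comp (fderiv ℝ ψ x) :=
    (Complex.conjCLE.toContinuousLinearMap.hasFDerivAt.comp x (hψ x).hasFDerivAt).fderiv
  rw [this]; rfl

lemma inner_deriv (ψ : ℝ×ℝ → ℂ) (b : ℝ×ℝ → ℝ) (hψ : ContDiff ℝ 2 ψ)
    (hb : Differentiable ℝ b) (x w : ℝ×ℝ) :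
    fderiv ℝ (fun y => fderiv ℝ ψ y w + Complex.I * (b y : ℂ) * ψ y) x w
      = fderiv ℝ (fun y => fderiv ℝ ψ y w) x w
        + Complex.I * (fderiv ℝ b x w : ℂ) * ψ x
        + Complex.I * (b x : ℂ) * fderiv ℝ ψ x w := by
  have hψd : Differentiable ℝ ψ := hψ.differentiable two_ne_zero
  have hfd : ContDiff ℝ 1 (fderiv ℝ ψ) := hψ.fderiv_right (m := 1) (by norm_num)
  have hpd : Differentiable ℝ (fun y => fderiv ℝ ψ y w) :=
    (hfd.differentiable one_ne_zero).clm_apply (differentiable_const _)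
  have hbC : Differentiable ℝ (fun y => ((b y : ℂ))) := Complex.ofRealCLM.differentiable.comp hb
  have hg : Differentiable ℝ (fun y => Complex.I * (b y : ℂ)) := hbC.const_mul _
  have hgψ : DifferentiableAt ℝ (fun y => Complex.I * (b y : ℂ) * ψ y) x :=
    ((hg x).mul (hψd x))
  have h2 : fderiv ℝ (fun y => Complex.I * (b y : ℂ) * ψ y) x w
      = Complex.I * (fderiv ℝ b x w : ℂ) * ψ x + Complex.I * (b x : ℂ) * fderiv ℝ ψ x w := by
    rw [fderiv_fun_mul (hg x) (hψd x)]
    simp only [ContinuousLinearMap.add_apply, ContinuousLinearMap.smul_apply, smul_eq_mul]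
    rw [fderiv_const_mul (hbC x)]
    simp only [ContinuousLinearMap.smul_apply, smul_eq_mul, ofReal_fderiv b hb x w]
    ring
  rw [fderiv_fun_add (hpd x) hgψ]
  simp only [ContinuousLinearMap.add_apply]
  rw [h2]; ring

lemma sup_deriv (ψ : ℝ×ℝ → ℂ) (b : ℝ×ℝ → ℝ) (hψ : ContDiff ℝ 2 ψ)
    (hb : Differentiable ℝ b) (x w : ℝ×ℝ) :
    fderiv ℝ (fun y => ((starRingEnd ℂ) (ψ y)
        * (fderiv ℝ ψ y w + Complex.I * (b y : ℂ) * ψ y)).im) x w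
    = ((starRingEnd ℂ) (fderiv ℝ ψ x w)
          * (fderiv ℝ ψ x w + Complex.I * (b x : ℂ) * ψ x)
       + (starRingEnd ℂ) (ψ x)
          * (fderiv ℝ (fun y => fderiv ℝ ψ y w) x w
             + Complex.I * (fderiv ℝ b x w : ℂ) * ψ x
             + Complex.I * (b x : ℂ) * fderiv ℝ ψ x w)).im := by
  have hψd : Differentiable ℝ ψ := hψ.differentiable two_ne_zero
  have hfd : ContDiff ℝ 1 (fderiv ℝ ψ) := hψ.fderiv_right (m := 1) (by norm_num)
  have hpd : Differentiable ℝ (fun y => fderiv ℝ ψ y w) :=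
    (hfd.differentiable one_ne_zero).clm_apply (differentiable_const _)
  have hbC : Differentiable ℝ (fun y => ((b y : ℂ))) := Complex.ofRealCLM.differentiable.comp hb
  have hcov : Differentiable ℝ (fun y => fderiv ℝ ψ y w + Complex.I * (b y : ℂ) * ψ y) :=
    hpd.add (((hbC.const_mul _)).mul hψd)
  have hconj : Differentiable ℝ (fun y => (starRingEnd ℂ) (ψ y)) :=
    Complex.conjCLE.differentiable.comp hψd
  have hF : DifferentiableAt ℝ (fun y => (starRingEnd ℂ) (ψ y)
      * (fderiv ℝ ψ y w + Complex.I * (b y : ℂ) * ψ y)) x := (hconj x).mul (hcov x)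
  have him : fderiv ℝ (fun y => ((starRingEnd ℂ) (ψ y)
        * (fderiv ℝ ψ y w + Complex.I * (b y : ℂ) * ψ y)).im) x
      = Complex.imCLM.comp (fderiv ℝ (fun y => (starRingEnd ℂ) (ψ y)
        * (fderiv ℝ ψ y w + Complex.I * (b y : ℂ) * ψ y)) x) :=
    (Complex.imCLM.hasFDerivAt.comp x hF.hasFDerivAt).fderiv
  rw [him]
  have hcplx : fderiv ℝ (fun y => (starRingEnd ℂ) (ψ y)
        * (fderiv ℝ ψ y w + Complex.I * (b y : ℂ) * ψ y)) x w
      = (starRingEnd ℂ) (fderiv ℝ ψ x w)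
          * (fderiv ℝ ψ x w + Complex.I * (b x : ℂ) * ψ x)
        + (starRingEnd ℂ) (ψ x)
          * (fderiv ℝ (fun y => fderiv ℝ ψ y w) x w
             + Complex.I * (fderiv ℝ b x w : ℂ) * ψ x
             + Complex.I * (b x : ℂ) * fderiv ℝ ψ x w) := by
    rw [fderiv_fun_mul (hconj x) (hcov x)]
    simp only [ContinuousLinearMap.add_apply, ContinuousLinearMap.smul_apply, smul_eq_mul]
    rw [conj_fderiv ψ hψd x w, inner_deriv ψ b hψ hb x w]
    ring
  simp only [ContinuousLinearMap.coe_comp', Function.comp_apply, hcplx, Complex.imCLM_apply]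

/-- For a solution of the stationary ZHK equation
`−Δ_aψ + v(|ψ|²)ψ − a₀ψ = 0`, the supercurrent is divergence free. -/
theorem supercurrent_divergence_free_of_ZHK
    (a : ℝ × ℝ → ℝ × ℝ) (a₀ : ℝ × ℝ → ℝ) (v : ℝ → ℝ) (ψ : ℝ × ℝ → ℂ)
    (ha : ContDiff ℝ 1 a) (ha₀ : Continuous a₀) (hψ : ContDiff ℝ 2 ψ)
    (heq : ∀ x : ℝ × ℝ,
      -(magLap a ψ x) + (v (‖ψ x‖ ^ 2) : ℂ) * ψ x - (a₀ x : ℂ) * ψ x = 0) :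
    ∀ x : ℝ × ℝ, pd1r (supJ1 a ψ) x + pd2r (supJ2 a ψ) x = 0 := by
  intro x
  have hb1 : Differentiable ℝ (fun y => (a y).1) := (ha.differentiable one_ne_zero).fst
  have hb2 : Differentiable ℝ (fun y => (a y).2) := (ha.differentiable one_ne_zero).snd
  have e1 : pd1r (supJ1 a ψ) x = _ := sup_deriv ψ (fun y => (a y).1) hψ hb1 x (1,0)
  have e2 : pd2r (supJ2 a ψ) x = _ := sup_deriv ψ (fun y => (a y).2) hψ hb2 x (0,1)
  have i1 : pd1 (covD1 a ψ) x = _ := inner_deriv ψ (fun y => (a y).1) hψ hb1 x (1,0)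
  have i2 : pd2 (covD2 a ψ) x = _ := inner_deriv ψ (fun y => (a y).2) hψ hb2 x (0,1)
  have hL : magLap a ψ x = ((v (‖ψ x‖ ^ 2) : ℝ) : ℂ) * ψ x - ((a₀ x : ℝ) : ℂ) * ψ x := by
    linear_combination -(heq x)
  have hm : ((starRingEnd ℂ) (ψ x) * magLap a ψ x).im = 0 := by
    rw [hL]
    simp only [mul_sub, Complex.sub_im, Complex.mul_im, Complex.mul_re,
      Complex.ofReal_re, Complex.ofReal_im, Complex.conj_re, Complex.conj_im]
    ring
  have hmag : magLap a ψ x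
      = pd1 (covD1 a ψ) x + Complex.I * (((a x).1 : ℝ) : ℂ) * covD1 a ψ x
        + (pd2 (covD2 a ψ) x + Complex.I * (((a x).2 : ℝ) : ℂ) * covD2 a ψ x) := rfl
  have c1 : covD1 a ψ x
      = fderiv ℝ ψ x (1,0) + Complex.I * (((a x).1 : ℝ) : ℂ) * ψ x := rfl
  have c2 : covD2 a ψ x
      = fderiv ℝ ψ x (0,1) + Complex.I * (((a x).2 : ℝ) : ℂ) * ψ x := rfl
  rw [hmag, i1, i2, c1, c2] at hm
  rw [e1, e2]
  simp only [Complex.add_im, Complex.add_re, Complex.mul_im, Complex.mul_re,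
    Complex.I_re, Complex.I_im, Complex.ofReal_re, Complex.ofReal_im,
    Complex.conj_re, Complex.conj_im] at hm ⊢
  linear_combination hm
end
end

section
/- Let v₁, v₂ ∈ ℝ² be linearly independent with fundamental cell P = {t₁v₁ + t₂v₂ : t₁,t₂ ∈ [0,1)} of area |P|, let b, b' ∈ ℝ with b'·|P| = 2πn for some n ∈ ℤ. Let ψ : ℝ² → ℂ be continuous with |ψ(x + v_j)| = |ψ(x)| for j = 1,2 and all x, and let a : ℝ² → ℝ² be continuously differentiable and satisfy a(x + v_j) = a(x) + (b'/2)·(−(v_j)₂, (v_j)₁) for j = 1,2 and all x, together with the Chern-Simons constraint curl a(x) = b − (1/2)|ψ(x)|² for all x. Then the charge per cell is quantized: ∫_P (1/2)|ψ|² dx = b·|P| − 2πn; equivalently, ∫_P ((1/2)|ψ|² − b) dx = −2πn ∈ 2πℤ. -/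
noncomputable section

open Complex

open MeasureTheory

/-- Fundamental parallelogram `{t₁v₁ + t₂v₂ : t₁, t₂ ∈ [0,1)}` of the lattice
generated by `v₁, v₂`. -/
def fundCell (v₁ v₂ : ℝ × ℝ) : Set (ℝ × ℝ) :=
  {x : ℝ × ℝ | ∃ t₁ t₂ : ℝ, t₁ ∈ Set.Ico (0 : ℝ) 1 ∧ t₂ ∈ Set.Ico (0 : ℝ) 1
    ∧ x = t₁ • v₁ + t₂ • v₂}

open Set

def Tclm (v₁ v₂ : ℝ × ℝ) : (ℝ × ℝ) →L[ℝ] (ℝ × ℝ) :=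
  (ContinuousLinearMap.fst ℝ ℝ ℝ).smulRight v₁ + (ContinuousLinearMap.snd ℝ ℝ ℝ).smulRight v₂

def Lv (v : ℝ × ℝ) : (ℝ × ℝ) →L[ℝ] ℝ :=
  v.1 • ContinuousLinearMap.fst ℝ ℝ ℝ + v.2 • ContinuousLinearMap.snd ℝ ℝ ℝ

theorem curl_eq (a : ℝ × ℝ → ℝ × ℝ) (ha : Differentiable ℝ a) (y : ℝ × ℝ) :
    curl2 a y = (fderiv ℝ a y (1, 0)).2 - (fderiv ℝ a y (0, 1)).1 := by
  have h1 : HasFDerivAt (fun z => (a z).2) ((ContinuousLinearMap.snd ℝ ℝ ℝ).comp (fderiv ℝ a y)) y :=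
    (ContinuousLinearMap.snd ℝ ℝ ℝ).hasFDerivAt.comp y (ha y).hasFDerivAt
  have h2 : HasFDerivAt (fun z => (a z).1) ((ContinuousLinearMap.fst ℝ ℝ ℝ).comp (fderiv ℝ a y)) y :=
    (ContinuousLinearMap.fst ℝ ℝ ℝ).hasFDerivAt.comp y (ha y).hasFDerivAt
  simp [curl2, pd1r, pd2r, h1.fderiv, h2.fderiv]


theorem curl_cont (a : ℝ × ℝ → ℝ × ℝ) (ha : ContDiff ℝ 1 a) :
    Continuous (curl2 a) := by
  have : Continuous (fderiv ℝ a) := ha.continuous_fderiv one_ne_zero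
  have h : Continuous fun y => (fderiv ℝ a y (1, 0)).2 - (fderiv ℝ a y (0, 1)).1 := by
    fun_prop
  exact h.congr fun y => (curl_eq a (ha.differentiable one_ne_zero) y).symm

theorem flux (v₁ v₂ : ℝ × ℝ) (b' : ℝ)
    (a : ℝ × ℝ → ℝ × ℝ) (ha : ContDiff ℝ 1 a)
    (ha₁ : ∀ x : ℝ × ℝ, a (x + v₁) = a x + (b' / 2) • (-v₁.2, v₁.1))
    (ha₂ : ∀ x : ℝ × ℝ, a (x + v₂) = a x + (b' / 2) • (-v₂.2, v₂.1)) :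
    ∫ t in Icc ((0:ℝ),(0:ℝ)) (1,1),
      (v₁.1 * v₂.2 - v₁.2 * v₂.1) * curl2 a (Tclm v₁ v₂ t)
      = b' * (v₁.1 * v₂.2 - v₁.2 * v₂.1) := by
  set d := v₁.1 * v₂.2 - v₁.2 * v₂.1 with hd
  set T := Tclm v₁ v₂ with hT
  have hdiff : Differentiable ℝ a := ha.differentiable one_ne_zero
  set A1 : ℝ × ℝ → ℝ := fun t => Lv v₁ (a (T t)) with hA1
  set A2 : ℝ × ℝ → ℝ := fun t => Lv v₂ (a (T t)) with hA2
  set f' : ℝ × ℝ → (ℝ × ℝ) →L[ℝ] ℝ :=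
    fun t => (Lv v₂).comp ((fderiv ℝ a (T t)).comp T) with hf'
  set g' : ℝ × ℝ → (ℝ × ℝ) →L[ℝ] ℝ :=
    fun t => -((Lv v₁).comp ((fderiv ℝ a (T t)).comp T)) with hg'
  have hTc : Continuous T := T.continuous
  have hDc : Continuous (fderiv ℝ a) := ha.continuous_fderiv one_ne_zero
  have hdf : ∀ t, HasFDerivAt A2 (f' t) t := fun t =>
    (Lv v₂).hasFDerivAt.comp t ((hdiff (T t)).hasFDerivAt.comp t T.hasFDerivAt)
  have hdg : ∀ t, HasFDerivAt (fun t => -A1 t) (g' t) t := fun t =>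
    ((Lv v₁).hasFDerivAt.comp t ((hdiff (T t)).hasFDerivAt.comp t T.hasFDerivAt)).neg
  have hconT : Continuous fun t => a (T t) := ha.continuous.comp hTc
  have hcA1 : Continuous A1 := (Lv v₁).continuous.comp hconT
  have hcA2 : Continuous A2 := (Lv v₂).continuous.comp hconT
  have hIc : Continuous fun x => f' x (1, 0) + g' x (0, 1) := by
    simp only [hf', hg', ContinuousLinearMap.comp_apply, ContinuousLinearMap.neg_apply]
    fun_prop
  have key := integral_divergence_prod_Icc_of_hasFDerivAt_off_countable_of_le
    A2 (fun t => -A1 t) f' g' ((0:ℝ),(0:ℝ)) (1,1) (by constructor <;> norm_num) ∅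
    countable_empty hcA2.continuousOn (hcA1.neg.continuousOn)
    (fun x _ => hdf x) (fun x _ => hdg x)
    (hIc.continuousOn.integrableOn_compact isCompact_Icc)
  -- pointwise identity for the integrand
  have hv1T : T (1, 0) = v₁ := by simp [hT, Tclm]
  have hv2T : T (0, 1) = v₂ := by simp [hT, Tclm]
  have hpt : ∀ x : ℝ × ℝ, f' x (1, 0) + g' x (0, 1) = d * curl2 a (T x) := by
    intro x
    set D := fderiv ℝ a (T x) with hD
    have e1 : D v₁ = v₁.1 • D (1, 0) + v₁.2 • D (0, 1) := by
      calc D v₁ = D (v₁.1 • ((1:ℝ),(0:ℝ)) + v₁.2 • ((0:ℝ),(1:ℝ))) := by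
            congr 1; simp [Prod.ext_iff]
      _ = v₁.1 • D (1,0) + v₁.2 • D (0,1) := by rw [map_add, D.map_smul, D.map_smul]
    have e2 : D v₂ = v₂.1 • D (1, 0) + v₂.2 • D (0, 1) := by
      calc D v₂ = D (v₂.1 • ((1:ℝ),(0:ℝ)) + v₂.2 • ((0:ℝ),(1:ℝ))) := by
            congr 1; simp [Prod.ext_iff]
      _ = v₂.1 • D (1,0) + v₂.2 • D (0,1) := by rw [map_add, D.map_smul, D.map_smul]
    rw [curl_eq a hdiff]
    simp only [hf', hg', ContinuousLinearMap.comp_apply, ContinuousLinearMap.neg_apply,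
      hv1T, hv2T, ← hD, e1, e2, map_add, _root_.map_smul, smul_eq_mul]
    simp only [Lv, ContinuousLinearMap.add_apply, ContinuousLinearMap.smul_apply,
      ContinuousLinearMap.coe_fst', ContinuousLinearMap.coe_snd', smul_eq_mul,
      Prod.smul_fst, Prod.smul_snd, Prod.fst_add, Prod.snd_add]
    ring
  have hLHS : ∫ x in Icc ((0:ℝ),(0:ℝ)) (1,1), f' x (1, 0) + g' x (0, 1)
      = ∫ x in Icc ((0:ℝ),(0:ℝ)) (1,1), d * curl2 a (T x) :=
    integral_congr_ae (Filter.Eventually.of_forall fun x => hpt x)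
  -- quasi-periodic shifts
  have hsh2 : ∀ x : ℝ, A1 (x, 1) = A1 (x, 0) - b' / 2 * d := by
    intro x
    have hTs : T (x, 1) = T (x, 0) + v₂ := by simp [hT, Tclm]
    rw [hA1]; simp only
    rw [hTs, ha₂, map_add]
    simp [Lv, hd]; ring
  have hsh1 : ∀ y : ℝ, A2 (1, y) = A2 (0, y) + b' / 2 * d := by
    intro y
    have hTs : T (1, y) = T (0, y) + v₁ := by simp [hT, Tclm]; abel
    rw [hA2]; simp only
    rw [hTs, ha₁, map_add]
    simp [Lv, hd]; ring
  -- boundary integrals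
  have hi1 : IntervalIntegrable (fun x : ℝ => -A1 (x, 0)) volume 0 1 :=
    (hcA1.neg.comp (continuous_id.prodMk continuous_const)).intervalIntegrable 0 1
  have hi2 : IntervalIntegrable (fun y : ℝ => A2 (0, y)) volume 0 1 :=
    (hcA2.comp (continuous_const.prodMk continuous_id)).intervalIntegrable 0 1
  have hb1 : (∫ x in (0:ℝ)..1, -A1 (x, 1)) = (∫ x in (0:ℝ)..1, -A1 (x, 0)) + b' / 2 * d := by
    have : ∀ x : ℝ, -A1 (x, 1) = -A1 (x, 0) + b' / 2 * d := fun x => by rw [hsh2]; ring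
    rw [intervalIntegral.integral_congr (g := fun x => -A1 (x, 0) + b' / 2 * d)
      (fun x _ => this x),
      intervalIntegral.integral_add hi1 (intervalIntegrable_const)]
    simp
  have hb2 : (∫ y in (0:ℝ)..1, A2 (1, y)) = (∫ y in (0:ℝ)..1, A2 (0, y)) + b' / 2 * d := by
    have : ∀ y : ℝ, A2 (1, y) = A2 (0, y) + b' / 2 * d := fun y => hsh1 y
    rw [intervalIntegral.integral_congr (g := fun y => A2 (0, y) + b' / 2 * d)
      (fun y _ => this y),
      intervalIntegral.integral_add hi2 (intervalIntegrable_const)]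
    simp
  rw [hLHS] at key
  rw [key]
  simp only
  rw [hb1, hb2]
  ring

theorem det_ne (v₁ v₂ : ℝ × ℝ) (hind : LinearIndependent ℝ ![v₁, v₂]) :
    v₁.1 * v₂.2 - v₁.2 * v₂.1 ≠ 0 := by
  intro h
  rw [LinearIndependent.pair_iff] at hind
  rcases eq_or_ne v₁ 0 with h0 | h0
  · have := (hind 1 0 (by simp [h0])).1; norm_num at this
  · have h1 := hind v₂.2 (-v₁.2) (by
      apply Prod.ext <;> simp <;> nlinarith [h])
    have h2 := hind v₂.1 (-v₁.1) (by
      apply Prod.ext <;> simp <;> nlinarith [h])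
    exact h0 (Prod.ext (by simpa using h2.2)
      (by simpa using neg_eq_zero.mp (by simpa using h1.2)))

theorem fundCell_eq (v₁ v₂ : ℝ × ℝ) :
    fundCell v₁ v₂ = (Tclm v₁ v₂) '' (Ico (0:ℝ) 1 ×ˢ Ico (0:ℝ) 1) := by
  ext x
  simp only [fundCell, mem_setOf_eq, mem_image, mem_prod, Prod.exists]
  constructor
  · rintro ⟨t₁, t₂, h₁, h₂, rfl⟩
    exact ⟨t₁, t₂, ⟨h₁, h₂⟩, by simp [Tclm]⟩
  · rintro ⟨t₁, t₂, ⟨h₁, h₂⟩, rfl⟩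
    exact ⟨t₁, t₂, h₁, h₂, by simp [Tclm]⟩

theorem T_inj (v₁ v₂ : ℝ × ℝ) (hd : v₁.1 * v₂.2 - v₁.2 * v₂.1 ≠ 0) :
    Function.Injective (Tclm v₁ v₂) := by
  intro s t h
  simp only [Tclm, ContinuousLinearMap.add_apply, ContinuousLinearMap.smulRight_apply,
    ContinuousLinearMap.coe_fst', ContinuousLinearMap.coe_snd'] at h
  have h1 : s.1 * v₁.1 + s.2 * v₂.1 = t.1 * v₁.1 + t.2 * v₂.1 := by
    have := congrArg Prod.fst h; simpa [mul_comm] using this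
  have h2 : s.1 * v₁.2 + s.2 * v₂.2 = t.1 * v₁.2 + t.2 * v₂.2 := by
    have := congrArg Prod.snd h; simpa [mul_comm] using this
  have e1 : s.1 = t.1 := by
    have : (s.1 - t.1) * (v₁.1 * v₂.2 - v₁.2 * v₂.1) = 0 := by
      linear_combination v₂.2 * h1 - v₂.1 * h2
    rcases mul_eq_zero.mp this with h | h
    · linarith [sub_eq_zero.mp h]
    · exact absurd h hd
  have e2 : s.2 = t.2 := by
    have : (s.2 - t.2) * (v₁.1 * v₂.2 - v₁.2 * v₂.1) = 0 := by
      linear_combination v₁.1 * h2 - v₁.2 * h1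
    rcases mul_eq_zero.mp this with h | h
    · linarith [sub_eq_zero.mp h]
    · exact absurd h hd
  exact Prod.ext e1 e2

theorem Tdet (v₁ v₂ : ℝ × ℝ) : (Tclm v₁ v₂).det = v₁.1 * v₂.2 - v₁.2 * v₂.1 := by
  rw [ContinuousLinearMap.det]
  rw [← LinearMap.det_toMatrix (Module.Basis.finTwoProd ℝ)]
  rw [Matrix.det_fin_two]
  simp [LinearMap.toMatrix_apply, Module.Basis.finTwoProd, Tclm]
  ring

theorem cov (v₁ v₂ : ℝ × ℝ) (hd : v₁.1 * v₂.2 - v₁.2 * v₂.1 ≠ 0) (g : ℝ × ℝ → ℝ) :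
    ∫ x in fundCell v₁ v₂, g x
      = |v₁.1 * v₂.2 - v₁.2 * v₂.1| * ∫ t in Ico (0:ℝ) 1 ×ˢ Ico (0:ℝ) 1, g (Tclm v₁ v₂ t) := by
  rw [fundCell_eq]
  rw [integral_image_eq_integral_abs_det_fderiv_smul volume
    (measurableSet_Ico.prod measurableSet_Ico)
    (fun x _ => (Tclm v₁ v₂).hasFDerivAt.hasFDerivWithinAt) ((T_inj v₁ v₂ hd).injOn) g]
  simp only [Tdet, smul_eq_mul]
  rw [integral_const_mul]

theorem prod_ae : (Ico (0:ℝ) 1 ×ˢ Ico (0:ℝ) 1 : Set (ℝ × ℝ))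
    =ᵐ[volume] Icc ((0:ℝ),(0:ℝ)) (1,1) := by
  rw [Icc_prod_eq]
  rw [MeasureTheory.ae_eq_set]
  constructor
  · rw [diff_eq_empty.mpr (prod_mono Ico_subset_Icc_self Ico_subset_Icc_self)]
    simp
  · refine measure_mono_null (t := (Icc (0:ℝ) 1 ×ˢ {(1:ℝ)}) ∪ ({(1:ℝ)} ×ˢ Icc (0:ℝ) 1)) ?_ ?_
    · rintro ⟨x, y⟩ ⟨⟨hx, hy⟩, hne⟩
      simp only [mem_Icc] at hx hy
      have hxy : x = 1 ∨ y = 1 := by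
        by_contra hc
        push_neg at hc
        exact hne ⟨⟨hx.1, lt_of_le_of_ne hx.2 hc.1⟩, ⟨hy.1, lt_of_le_of_ne hy.2 hc.2⟩⟩
      rcases hxy with h | h
      · exact Or.inr ⟨by simp [h], by simp [mem_Icc, hy.1, hy.2]⟩
      · exact Or.inl ⟨by simp [mem_Icc, hx.1, hx.2], by simp [h]⟩
    · rw [Measure.volume_eq_prod]
      apply measure_union_null <;> rw [Measure.prod_prod] <;> simp

/-- Charge quantization per lattice cell: under the Chern-Simons constraint
`curl a = b − (1/2)|ψ|²` and flux quantization `b'·|P| = 2πn`,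
`∫_P (1/2)|ψ|² = b·|P| − 2πn`, i.e. `∫_P ((1/2)|ψ|² − b) = −2πn ∈ 2πℤ`. -/
theorem ZHK_charge_quantization
    (v₁ v₂ : ℝ × ℝ) (hind : LinearIndependent ℝ ![v₁, v₂])
    (b b' : ℝ) (n : ℤ)
    (hb' : b' * |v₁.1 * v₂.2 - v₁.2 * v₂.1| = 2 * Real.pi * n)
    (ψ : ℝ × ℝ → ℂ) (hψ : Continuous ψ)
    (hψ₁ : ∀ x : ℝ × ℝ, ‖ψ (x + v₁)‖ = ‖ψ x‖)
    (hψ₂ : ∀ x : ℝ × ℝ, ‖ψ (x + v₂)‖ = ‖ψ x‖)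
    (a : ℝ × ℝ → ℝ × ℝ) (ha : ContDiff ℝ 1 a)
    (ha₁ : ∀ x : ℝ × ℝ, a (x + v₁) = a x + (b' / 2) • (-v₁.2, v₁.1))
    (ha₂ : ∀ x : ℝ × ℝ, a (x + v₂) = a x + (b' / 2) • (-v₂.2, v₂.1))
    (hconstr : ∀ x : ℝ × ℝ, curl2 a x = b - (1 / 2) * ‖ψ x‖ ^ 2) :
    (∫ x in fundCell v₁ v₂, (1 / 2) * ‖ψ x‖ ^ 2
        = b * |v₁.1 * v₂.2 - v₁.2 * v₂.1| - 2 * Real.pi * n)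
    ∧ ∫ x in fundCell v₁ v₂, ((1 / 2) * ‖ψ x‖ ^ 2 - b)
        = -(2 * Real.pi * n) := by

  set d := v₁.1 * v₂.2 - v₁.2 * v₂.1 with hdd
  have hd : d ≠ 0 := det_ne v₁ v₂ hind
  have hcurlc : Continuous (curl2 a) := curl_cont a ha
  have hTc : Continuous (Tclm v₁ v₂) := (Tclm v₁ v₂).continuous
  have hvol : volume (Icc ((0:ℝ),(0:ℝ)) (1,1)) = 1 := by
    rw [Icc_prod_eq, Measure.volume_eq_prod, Measure.prod_prod]
    simp [Real.volume_Icc]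
  have hIcurl : IntegrableOn (fun t => curl2 a (Tclm v₁ v₂ t))
      (Icc ((0:ℝ),(0:ℝ)) (1,1)) volume :=
    ((hcurlc.comp hTc).continuousOn).integrableOn_compact isCompact_Icc
  have hIconst : IntegrableOn (fun _ : ℝ × ℝ => b) (Icc ((0:ℝ),(0:ℝ)) (1,1)) volume := by
    apply (integrableOn_const_iff (C := b)).mpr
    exact Or.inr (by rw [hvol]; exact ENNReal.one_lt_top)
  have Kc : ∫ t in Icc ((0:ℝ),(0:ℝ)) (1,1), curl2 a (Tclm v₁ v₂ t) = b' := by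
    have h := flux v₁ v₂ b' a ha ha₁ ha₂
    rw [integral_const_mul] at h
    rw [← hdd] at h
    calc ∫ t in Icc ((0:ℝ),(0:ℝ)) (1,1), curl2 a (Tclm v₁ v₂ t)
        = d⁻¹ * (d * ∫ t in Icc ((0:ℝ),(0:ℝ)) (1,1), curl2 a (Tclm v₁ v₂ t)) := by
          field_simp
    _ = d⁻¹ * (b' * d) := by rw [h]
    _ = b' := by field_simp
  have H1 : ∫ t in Icc ((0:ℝ),(0:ℝ)) (1,1), (1/2 : ℝ) * ‖ψ (Tclm v₁ v₂ t)‖ ^ 2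
      = b - b' := by
    have hpw : ∀ t : ℝ × ℝ, (1/2 : ℝ) * ‖ψ (Tclm v₁ v₂ t)‖ ^ 2
        = b - curl2 a (Tclm v₁ v₂ t) := by
      intro t; have := hconstr (Tclm v₁ v₂ t); linarith
    rw [integral_congr_ae (Filter.Eventually.of_forall fun t => hpw t)]
    rw [integral_sub hIconst hIcurl, Kc, setIntegral_const, measureReal_def, hvol]
    simp
  have H2 : ∫ t in Icc ((0:ℝ),(0:ℝ)) (1,1), ((1/2 : ℝ) * ‖ψ (Tclm v₁ v₂ t)‖ ^ 2 - b)
      = -b' := by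
    have hpw : ∀ t : ℝ × ℝ, (1/2 : ℝ) * ‖ψ (Tclm v₁ v₂ t)‖ ^ 2 - b
        = -curl2 a (Tclm v₁ v₂ t) := by
      intro t; have := hconstr (Tclm v₁ v₂ t); linarith
    rw [integral_congr_ae (Filter.Eventually.of_forall fun t => hpw t)]
    rw [integral_neg, Kc]
  constructor
  · rw [cov v₁ v₂ hd (fun x => (1/2 : ℝ) * ‖ψ x‖ ^ 2)]
    rw [setIntegral_congr_set prod_ae, H1, ← hdd, ← hb']
    ring
  · rw [cov v₁ v₂ hd (fun x => (1/2 : ℝ) * ‖ψ x‖ ^ 2 - b)]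
    rw [setIntegral_congr_set prod_ae, H2, ← hdd, ← hb']
    ring
end
end
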